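/- Under dichotomous valuations, let (A, p) be an envy-free solution with p ∈ {0,1}^n that is extendable with an unallocated good g via permutation σ and agent κ (i.e., B := A_σ with subsidies q := p_σ is envy-free, κ is among the most-subsidized agents under q, and v_κ(B_κ ∪ {g}) − v_κ(B_κ) = 1). Then the allocation C := (B_1, ..., B_κ ∪ {g}, ..., B_n) is envy-freeable with a subsidy vector in {0,1}^n. -/
import Mathlib


/-- Under dichotomous valuations, let `(A, p)` be an envy-free
solution with `p ∈ {0,1}^n` that is extendable with an unallocated good `g` via a
permutation `σ` and agent `κ`: with `B := A_σ` and `q := p_σ`, the pair `(B, q)`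
is an envy-free solution, `κ` is among the most subsidized agents under `q`, and
the marginal value of `g` for `κ` relative to `B κ` is `1`. Then the allocation
`C` obtained from `B` by adding `g` to `B κ` is envy-freeable with a subsidy
vector in `{0,1}^n`. -/
theorem extendable_keeps_binary_subsidies {n m : ℕ}
    (v : Fin n → Finset (Fin m) → ℝ)
    (hempty : ∀ i, v i ∅ = 0)
    (hdich : ∀ i (S : Finset (Fin m)) (g : Fin m),
        v i (insert g S) - v i S = 0 ∨ v i (insert g S) - v i S = 1)
    (A : Fin n → Finset (Fin m))
    (hdisj : ∀ i j, i ≠ j → Disjoint (A i) (A j))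
    (p : Fin n → ℝ) (hp01 : ∀ i, p i = 0 ∨ p i = 1)
    (hEF : ∀ i j, v i (A j) + p j ≤ v i (A i) + p i)
    (g : Fin m) (hg : ∀ i, g ∉ A i)
    (σ : Equiv.Perm (Fin n)) (κ : Fin n)
    (B : Fin n → Finset (Fin m)) (hB : B = fun i => A (σ i))
    (q : Fin n → ℝ) (hq : q = fun i => p (σ i))
    (hEFB : ∀ i j, v i (B j) + q j ≤ v i (B i) + q i)
    (hκmax : ∀ j, q j ≤ q κ)
    (hκmarg : v κ (insert g (B κ)) - v κ (B κ) = 1) :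
    ∃ q' : Fin n → ℝ, (∀ i, q' i = 0 ∨ q' i = 1) ∧
      ∀ i j, v i (Function.update B κ (insert g (B κ)) j) + q' j ≤
        v i (Function.update B κ (insert g (B κ)) i) + q' i := by
  have hq01 : ∀ i, q i = 0 ∨ q i = 1 := by
    intro i; rw [hq]; exact hp01 _
  have hmarg : ∀ i, v i (insert g (B κ)) ≤ v i (B κ) + 1 := by
    intro i
    rcases hdich i (B κ) g with h | h <;> linarith
  have hκ : v κ (insert g (B κ)) = v κ (B κ) + 1 := by linarith [hκmarg]
  rcases hq01 κ with hκ0 | hκ1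
  · have hall : ∀ j, q j = 0 := fun j => by
      rcases hq01 j with h | h
      · exact h
      · have := hκmax j; linarith
    refine ⟨fun j => if j = κ then 0 else 1, fun i => ?_, ?_⟩
    · by_cases h : i = κ <;> simp [h]
    intro i j
    rcases eq_or_ne i κ with hi | hi <;> rcases eq_or_ne j κ with hj | hj
    · subst hi; subst hj; exact le_refl _
    · subst hi
      beta_reduce
      rw [Function.update_of_ne hj, Function.update_self, if_neg hj,
        if_pos rfl]
      have h1 := hEFB i j
      rw [hall j, hall i] at h1
      linarith [hκ]
    · subst hj
      beta_reduce
      rw [Function.update_of_ne hi, Function.update_self, if_neg hi,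
        if_pos rfl]
      have h1 := hEFB i j
      rw [hall i, hall j] at h1
      linarith [hmarg i]
    · beta_reduce
      rw [Function.update_of_ne hi, Function.update_of_ne hj, if_neg hi,
        if_neg hj]
      have h1 := hEFB i j
      rw [hall i, hall j] at h1
      linarith
  · refine ⟨fun j => if j = κ then 0 else q j, fun i => ?_, ?_⟩
    · by_cases h : i = κ
      · simp [h]
      · simpa [h] using hq01 i
    intro i j
    rcases eq_or_ne i κ with hi | hi <;> rcases eq_or_ne j κ with hj | hj
    · subst hi; subst hj; exact le_refl _
    · subst hi
      beta_reduce
      rw [Function.update_of_ne hj, Function.update_self, if_neg hj,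
        if_pos rfl]
      have h1 := hEFB i j
      rw [hκ1] at h1
      linarith [hκ]
    · subst hj
      beta_reduce
      rw [Function.update_of_ne hi, Function.update_self, if_neg hi,
        if_pos rfl]
      have h1 := hEFB i j
      rw [hκ1] at h1
      linarith [hmarg i]
    · beta_reduce
      rw [Function.update_of_ne hi, Function.update_of_ne hj, if_neg hi,
        if_neg hj]
      exact hEFB i j
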